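/- arXiv:math-ph/0512070 — 3 statements merged into one kernel-verified Lean document; each statement's English description precedes it below -/
import Mathlib

section
/- For all measurable sets Δ, Δ' ⊆ Γ₁ with λ(Δ) < ∞ and λ(Δ') < ∞, the operators A(Δ') and A*(Δ) satisfy the canonical commutation relation on D: for every f ∈ D, A(Δ')(A*(Δ)f) − A*(Δ)(A(Δ')f) = λ(Δ ∩ Δ') · f. -/
set_option linter.unusedSectionVars false
set_option linter.unusedVariables false
set_option maxHeartbeats 1000000


/-!
Fock space over the chain space Γ = ⋃ₙ Γₙ, Γₙ = time-ordered n-tuples in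
Γ₁ = [0,∞) × Λ.  Creation `create Δ` and annihilation `annihilate lam Δ`
operators satisfy the CCR on the domain D = ⋃_{ξ>1} D(ξ).
-/

open MeasureTheory

namespace QuantumChains

variable {Λ : Type*} [MeasurableSpace Λ]

/-- The measure `dt ⊗ λ(d𝐱)` on `Γ₁ = [0,∞) × Λ` (modeled as `ℝ × Λ` with the
time coordinate measure supported on `[0,∞)`). -/
noncomputable def baseMeasure (lam : Measure Λ) : Measure (ℝ × Λ) :=
  (volume.restrict (Set.Ici (0 : ℝ))).prod lam

/-- The space of chains: disjoint union of the `n`-tuples of points of `Γ₁`. -/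
abbrev Chains (Λ : Type*) := Σ n : ℕ, (Fin n → ℝ × Λ)

/-- The set `Γₙ` of time-ordered `n`-tuples. -/
def ordered (Λ : Type*) (n : ℕ) : Set (Fin n → ℝ × Λ) :=
  {χ | StrictMono fun i => (χ i).1}

/-- The measure `λ(dχ)` on the chain space `Γ`: on `Γₙ` it is the `n`-fold
product of `baseMeasure lam`, restricted to time-ordered tuples. -/
noncomputable def chainMeasure (lam : Measure Λ) [SigmaFinite lam] :
    Measure (Chains Λ) :=
  Measure.sum fun n =>
    ((Measure.pi fun _ : Fin n => baseMeasure lam).restrict (ordered Λ n)).map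
      (Sigma.mk n)

/-- Insertion `χ ⊔ x` of a point `x` into a chain `χ` (at the position
determined by the time coordinate). -/
noncomputable def insertChain {n : ℕ} (χ : Fin n → ℝ × Λ) (x : ℝ × Λ) (j : Fin (n + 1)) :
    ℝ × Λ :=
  if h1 : (j : ℕ) < ((Finset.univ : Finset (Fin n)).filter
      fun i => (χ i).1 < x.1).card then
    χ ⟨j, h1.trans_le (card_finset_fin_le _)⟩
  else if h2 : (j : ℕ) = ((Finset.univ : Finset (Fin n)).filter
      fun i => (χ i).1 < x.1).card then x
  else
    χ ⟨(j : ℕ) - 1, by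
      have hk := card_finset_fin_le
        ((Finset.univ : Finset (Fin n)).filter fun i => (χ i).1 < x.1)
      have hj := j.isLt
      omega⟩

/-- The annihilation operator `(A(Δ)f)(χ) = ∫_Δ f(χ ⊔ x) λ(dx)`. -/
noncomputable def annihilate (lam : Measure Λ) (Δ : Set (ℝ × Λ))
    (f : Chains Λ → ℂ) : Chains Λ → ℂ := fun χ =>
  ∫ x in Δ, f ⟨χ.1 + 1, insertChain χ.2 x⟩ ∂(baseMeasure lam)

/-- The creation operator `(A*(Δ)f)(χ) = Σ_{x ∈ χ ∩ Δ} f(χ ∖ x)`. -/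
noncomputable def create (Δ : Set (ℝ × Λ)) (f : Chains Λ → ℂ) :
    Chains Λ → ℂ := fun χ =>
  match χ with
  | ⟨0, _⟩ => 0
  | ⟨n + 1, c⟩ => ∑ i : Fin (n + 1),
      Δ.indicator (fun _ => f ⟨n, i.removeNth c⟩) (c i)

/-- The domain `D = ⋃_{ξ > 1} D(ξ)`,
`D(ξ) = {f ∈ L²(Γ) : ∫ ξ^{|χ|} |f(χ)|² λ(dχ) < ∞}`. -/
def memD (lam : Measure Λ) [SigmaFinite lam] (f : Chains Λ → ℂ) : Prop :=
  Measurable f ∧ ∃ ξ : ℝ, 1 < ξ ∧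
    ∫⁻ χ, ENNReal.ofReal (ξ ^ χ.1) * (‖f χ‖₊ : ENNReal) ^ 2
      ∂(chainMeasure lam) < ⊤

/-! ### Auxiliary lemmas -/

theorem measurable_sigma_mk' {ι : Type*} {β : ι → Type*} [∀ i, MeasurableSpace (β i)]
    (a : ι) : Measurable (@Sigma.mk ι β a) := fun s hs =>
  MeasurableSpace.measurableSet_iInf.1 hs a

theorem measurableEmbedding_sigma_mk' {ι : Type*} [MeasurableSpace ι]
    [MeasurableSingletonClass ι] {β : ι → Type*}
    [∀ i, MeasurableSpace (β i)] (a : ι) : MeasurableEmbedding (@Sigma.mk ι β a) := by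
  refine ⟨sigma_mk_injective, measurable_sigma_mk' a, fun {s} hs => ?_⟩
  rw [MeasurableSpace.measurableSet_iInf]
  intro b
  show MeasurableSet (Sigma.mk b ⁻¹' (Sigma.mk a '' s))
  by_cases hba : b = a
  · subst hba
    rwa [Set.preimage_image_eq _ sigma_mk_injective]
  · have : Sigma.mk b ⁻¹' (Sigma.mk a '' s) = ∅ := by
      ext y
      simp only [Set.mem_preimage, Set.mem_image, Set.mem_empty_iff_false, iff_false]
      rintro ⟨z, _, hz⟩
      exact hba (congrArg Sigma.fst hz).symm
    rw [this]; exact MeasurableSet.empty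


/-- number of entries of `χ` with time `< x.1` -/
noncomputable def pos {n : ℕ} (χ : Fin n → ℝ × Λ) (x : ℝ × Λ) : ℕ :=
  ((Finset.univ : Finset (Fin n)).filter fun i => (χ i).1 < x.1).card

theorem pos_le {n : ℕ} (χ : Fin n → ℝ × Λ) (x : ℝ × Λ) : pos χ x ≤ n :=
  card_finset_fin_le _

/-- The insertion position as an element of `Fin (n+1)`. -/
noncomputable def posFin {n : ℕ} (χ : Fin n → ℝ × Λ) (x : ℝ × Λ) : Fin (n + 1) :=
  ⟨pos χ x, Nat.lt_succ_of_le (pos_le χ x)⟩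

theorem pos_eq_sum {n : ℕ} (χ : Fin n → ℝ × Λ) (x : ℝ × Λ) :
    pos χ x = ∑ i : Fin n, if (χ i).1 < x.1 then 1 else 0 :=
  Finset.card_filter _ _

theorem pos_removeNth {n : ℕ} (χ : Fin (n + 1) → ℝ × Λ) (x : ℝ × Λ) (j : Fin (n + 1)) :
    pos (j.removeNth χ) x = if (χ j).1 < x.1 then pos χ x - 1 else pos χ x := by
  have h : pos χ x = (if (χ j).1 < x.1 then 1 else 0) + pos (j.removeNth χ) x := by
    rw [pos_eq_sum, pos_eq_sum, Fin.sum_univ_succAbove (fun i => if (χ i).1 < x.1 then 1 else 0) j]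
    rfl
  split_ifs at h ⊢ <;> omega



theorem val_succAbove {n : ℕ} (p : Fin (n + 1)) (i : Fin n) :
    (p.succAbove i : ℕ) = if (i : ℕ) < (p : ℕ) then (i : ℕ) else (i : ℕ) + 1 := by
  by_cases h : (i : ℕ) < (p : ℕ)
  · rw [Fin.succAbove_of_castSucc_lt _ _ (by simpa [Fin.lt_def] using h)]
    simp [h]
  · rw [Fin.succAbove_of_le_castSucc _ _ (by simpa [Fin.le_def] using Nat.le_of_not_lt h)]
    simp [h]

theorem val_predAbove {n : ℕ} (j : Fin n) (p : Fin (n + 1)) :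
    (j.predAbove p : ℕ) = if (j : ℕ) < (p : ℕ) then (p : ℕ) - 1 else (p : ℕ) := by
  rcases lt_or_ge (j : ℕ) (p : ℕ) with h | h
  · rw [Fin.predAbove_of_castSucc_lt _ _ (by simpa [Fin.lt_def] using h)]
    simp [h, Fin.coe_pred]
  · rw [Fin.predAbove_of_le_castSucc _ _ (by simpa [Fin.le_def] using h)]
    simp [Nat.not_lt.2 h, Fin.coe_castPred]

theorem succAbove_succAbove_predAbove' {n : ℕ} (p : Fin (n + 2)) (j : Fin (n + 1)) :
    (p.succAbove j).succAbove (j.predAbove p) = p := by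
  apply Fin.ext
  have e1 := val_succAbove p j
  have e2 := val_predAbove j p
  have e3 := val_succAbove (p.succAbove j) (j.predAbove p)
  have hj := j.isLt
  have hp := p.isLt
  rw [e3]
  split_ifs at e1 e2 ⊢ <;> omega

theorem succAbove_quad {n : ℕ} (p : Fin (n + 2)) (j : Fin (n + 1)) (k : Fin n) :
    (p.succAbove j).succAbove ((j.predAbove p).succAbove k) = p.succAbove (j.succAbove k) := by
  apply Fin.ext
  have e1 := val_succAbove p j
  have e2 := val_predAbove j p
  have e3 := val_succAbove (j.predAbove p) k
  have e4 := val_succAbove (p.succAbove j) ((j.predAbove p).succAbove k)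
  have e5 := val_succAbove j k
  have e6 := val_succAbove p (j.succAbove k)
  have hj := j.isLt
  have hp := p.isLt
  have hk := k.isLt
  rw [e4, e6]
  split_ifs at e1 e2 e3 e5 ⊢ <;> omega

theorem removeNth_succAbove_insertNth {α : Type*} {n : ℕ} (p : Fin (n + 2)) (j : Fin (n + 1))
    (x : α) (χ : Fin (n + 1) → α) :
    Fin.removeNth (α := fun _ => α) (p.succAbove j) (Fin.insertNth p x χ) =
      Fin.insertNth (j.predAbove p) x (j.removeNth χ) := by
  have h1 : Fin.removeNth (α := fun _ => α) (p.succAbove j) (Fin.insertNth p x χ)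
      (j.predAbove p) = x := by
    simp only [Fin.removeNth]
    rw [succAbove_succAbove_predAbove', Fin.insertNth_apply_same]
  have h2 : Fin.removeNth (α := fun _ => α) (j.predAbove p)
      (Fin.removeNth (α := fun _ => α) (p.succAbove j) (Fin.insertNth p x χ)) =
      j.removeNth χ := by
    funext k
    simp only [Fin.removeNth]
    rw [succAbove_quad, Fin.insertNth_apply_succAbove]
  funext k
  rcases eq_or_ne k (j.predAbove p) with rfl | hk
  · rw [Fin.insertNth_apply_same]; exact h1
  · obtain ⟨i, rfl⟩ := Fin.exists_succAbove_eq hk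
    rw [Fin.insertNth_apply_succAbove]
    exact congrFun h2 i




theorem insertNth_apply_val {α : Type*} {n : ℕ} (p : Fin (n + 1)) (x : α) (χ : Fin n → α)
    (j : Fin (n + 1)) :
    Fin.insertNth (α := fun _ => α) p x χ j =
      if h : (j : ℕ) < (p : ℕ) then χ ⟨j, by have := p.isLt; omega⟩
      else if h2 : (j : ℕ) = (p : ℕ) then x
      else χ ⟨(j : ℕ) - 1, by have := j.isLt; omega⟩ := by
  rcases lt_trichotomy (j : ℕ) (p : ℕ) with h | h | h
  · set i : Fin n := ⟨(j : ℕ), by have := p.isLt; omega⟩ with hi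
    have hsa : p.succAbove i = j := by
      apply Fin.ext; rw [val_succAbove]; simp [hi, h]
    have L : Fin.insertNth (α := fun _ => α) p x χ j = χ i := by
      conv_lhs => rw [← hsa]
      rw [Fin.insertNth_apply_succAbove]
    rw [L, dif_pos h]
  · have hj : j = p := Fin.ext h
    have L : Fin.insertNth (α := fun _ => α) p x χ j = x := by
      conv_lhs => rw [hj]
      rw [Fin.insertNth_apply_same]
    rw [L, dif_neg (by omega), dif_pos h]
  · set i : Fin n := ⟨(j : ℕ) - 1, by have := j.isLt; omega⟩ with hi
    have hsa : p.succAbove i = j := by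
      apply Fin.ext; rw [val_succAbove]; simp only [hi, Fin.val_mk]
      split_ifs <;> omega
    have L : Fin.insertNth (α := fun _ => α) p x χ j = χ i := by
      conv_lhs => rw [← hsa]
      rw [Fin.insertNth_apply_succAbove]
    rw [L, dif_neg (by omega), dif_neg (by omega)]

theorem insertChain_eq {n : ℕ} (χ : Fin n → ℝ × Λ) (x : ℝ × Λ) :
    insertChain χ x = Fin.insertNth (posFin χ x) x χ := by
  funext j
  rw [insertNth_apply_val]
  rfl

theorem insertChain_apply_posFin {n : ℕ} (χ : Fin n → ℝ × Λ) (x : ℝ × Λ) :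
    insertChain χ x (posFin χ x) = x := by
  rw [insertChain_eq, Fin.insertNth_apply_same]

theorem removeNth_posFin_insertChain {n : ℕ} (χ : Fin n → ℝ × Λ) (x : ℝ × Λ) :
    Fin.removeNth (α := fun _ => ℝ × Λ) (posFin χ x) (insertChain χ x) = χ := by
  rw [insertChain_eq]
  exact Fin.removeNth_insertNth _ _ _

theorem insertChain_apply_succAbove {n : ℕ} (χ : Fin n → ℝ × Λ) (x : ℝ × Λ) (j : Fin n) :
    insertChain χ x ((posFin χ x).succAbove j) = χ j := by
  rw [insertChain_eq, Fin.insertNth_apply_succAbove]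

theorem lt_pos_iff {n : ℕ} {χ : Fin n → ℝ × Λ} (hord : StrictMono fun i => (χ i).1)
    (x : ℝ × Λ) (j : Fin n) : (j : ℕ) < pos χ x ↔ (χ j).1 < x.1 := by
  constructor
  · intro h
    by_contra hc
    have hsub : ((Finset.univ : Finset (Fin n)).filter fun i => (χ i).1 < x.1) ⊆
        Finset.Iio j := by
      intro i hi
      simp only [Finset.mem_filter, Finset.mem_univ, true_and] at hi
      rw [Finset.mem_Iio]
      by_contra hij
      push_neg at hij
      exact hc (lt_of_le_of_lt (hord.monotone hij) hi)
    have hcard := Finset.card_le_card hsub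
    rw [Fin.card_Iio] at hcard
    have : pos χ x ≤ (j : ℕ) := hcard
    omega
  · intro h
    have hsub : Finset.Iic j ⊆
        ((Finset.univ : Finset (Fin n)).filter fun i => (χ i).1 < x.1) := by
      intro i hi
      simp only [Finset.mem_Iic] at hi
      simp only [Finset.mem_filter, Finset.mem_univ, true_and]
      rcases eq_or_lt_of_le hi with heq | hlt
      · rw [heq]; exact h
      · exact lt_trans (hord hlt) h
    have hcard := Finset.card_le_card hsub
    rw [Fin.card_Iic] at hcard
    have : (j : ℕ) + 1 ≤ pos χ x := hcard
    omega

theorem predAbove_posFin {n : ℕ} {χ : Fin (n + 1) → ℝ × Λ}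
    (hord : StrictMono fun i => (χ i).1) (x : ℝ × Λ) (j : Fin (n + 1)) :
    j.predAbove (posFin χ x) = posFin (j.removeNth χ) x := by
  apply Fin.ext
  rw [val_predAbove]
  show _ = pos (j.removeNth χ) x
  rw [pos_removeNth]
  have hiff := lt_pos_iff hord x j
  show (if (j : ℕ) < pos χ x then pos χ x - 1 else pos χ x) = _
  split_ifs with h1 h2 h2
  · rfl
  · exact absurd (hiff.1 h1) h2
  · exact absurd (hiff.2 h2) h1
  · rfl

theorem removeNth_insertChain {n : ℕ} {χ : Fin (n + 1) → ℝ × Λ}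
    (hord : StrictMono fun i => (χ i).1) (x : ℝ × Λ) (j : Fin (n + 1)) :
    Fin.removeNth (α := fun _ => ℝ × Λ) ((posFin χ x).succAbove j) (insertChain χ x) =
      insertChain (j.removeNth χ) x := by
  rw [insertChain_eq, insertChain_eq, removeNth_succAbove_insertNth, predAbove_posFin hord]

theorem strictMono_removeNth {n : ℕ} {χ : Fin (n + 1) → ℝ × Λ}
    (hord : StrictMono fun i => (χ i).1) (j : Fin (n + 1)) :
    StrictMono fun i => ((j.removeNth χ) i).1 :=
  fun _ _ hab => hord (Fin.strictMono_succAbove j hab)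

theorem strictMono_insertChain {n : ℕ} {χ : Fin n → ℝ × Λ}
    (hord : StrictMono fun i => (χ i).1) {x : ℝ × Λ} (hx : ∀ i, (χ i).1 ≠ x.1) :
    StrictMono fun k => ((insertChain χ x) k).1 := by
  have key : ∀ i : Fin n, ((χ i).1 < x.1 ↔ (i : ℕ) < pos χ x) :=
    fun i => (lt_pos_iff hord x i).symm
  have key2 : ∀ i : Fin n, pos χ x ≤ (i : ℕ) → x.1 < (χ i).1 := by
    intro i hi
    rcases lt_trichotomy (χ i).1 x.1 with h | h | h
    · have := (key i).1 h; omega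
    · exact absurd h (hx i)
    · exact h
  have hv : ∀ k : Fin (n + 1), insertChain χ x k =
      if h : (k : ℕ) < pos χ x then χ ⟨k, by have := pos_le χ x; omega⟩
      else if h2 : (k : ℕ) = pos χ x then x
      else χ ⟨(k : ℕ) - 1, by have := k.isLt; omega⟩ := by
    intro k
    rw [insertChain_eq, insertNth_apply_val]
    rfl
  intro a b hab
  have hab' : (a : ℕ) < (b : ℕ) := hab
  show (insertChain χ x a).1 < (insertChain χ x b).1
  rw [hv a, hv b]
  have hP := pos_le χ x
  have ha := a.isLt
  have hb := b.isLt
  split_ifs <;>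
    first
      | omega
      | (apply hord; simp only [Fin.mk_lt_mk]; omega)
      | (refine (key _).2 ?_; simp only [Fin.val_mk]; omega)
      | (refine key2 _ ?_; simp only [Fin.val_mk]; omega)
      | (refine lt_trans (key2 _ ?_) (hord ?_) <;> simp only [Fin.val_mk, Fin.mk_lt_mk] <;> omega)



/-! ### Measurability -/

theorem measurable_apply_nat {α β : Type*} [MeasurableSpace α] [MeasurableSpace β]
    {g : α → ℕ} (hg : Measurable g) {F : ℕ → α → β} (hF : ∀ k, Measurable (F k)) :
    Measurable fun a => F (g a) a := by
  have h : (fun a => F (g a) a) = (fun q : α × ℕ => F q.2 q.1) ∘ fun a => (a, g a) := rfl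
  rw [h]
  exact (measurable_from_prod_countable_left fun k => hF k).comp (measurable_id.prodMk hg)

theorem measurable_pos_pair {n : ℕ} :
    Measurable fun p : (Fin n → ℝ × Λ) × (ℝ × Λ) => pos p.1 p.2 := by
  have h : (fun p : (Fin n → ℝ × Λ) × (ℝ × Λ) => pos p.1 p.2)
      = fun p => ∑ i : Fin n, if (p.1 i).1 < p.2.1 then 1 else 0 := by
    funext p; exact pos_eq_sum _ _
  rw [h]
  refine Finset.measurable_sum _ fun i _ => ?_
  have hs : MeasurableSet {p : (Fin n → ℝ × Λ) × (ℝ × Λ) | (p.1 i).1 < p.2.1} :=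
    measurableSet_lt ((measurable_pi_apply i).comp measurable_fst).fst measurable_snd.fst
  exact Measurable.ite hs measurable_const measurable_const

theorem measurable_insertNth_fixed {n : ℕ} (q : Fin (n + 1)) :
    Measurable fun p : (Fin n → ℝ × Λ) × (ℝ × Λ) =>
      Fin.insertNth (α := fun _ => ℝ × Λ) q p.2 p.1 := by
  apply measurable_pi_lambda
  intro j
  rcases eq_or_ne j q with rfl | hj
  · have h : (fun p : (Fin n → ℝ × Λ) × (ℝ × Λ) =>
        Fin.insertNth (α := fun _ => ℝ × Λ) j p.2 p.1 j) = fun p => p.2 := by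
      funext p; rw [Fin.insertNth_apply_same]
    rw [h]; exact measurable_snd
  · obtain ⟨i, rfl⟩ := Fin.exists_succAbove_eq hj
    have h : (fun p : (Fin n → ℝ × Λ) × (ℝ × Λ) =>
        Fin.insertNth (α := fun _ => ℝ × Λ) q p.2 p.1 (q.succAbove i)) = fun p => p.1 i := by
      funext p; rw [Fin.insertNth_apply_succAbove]
    rw [h]; exact (measurable_pi_apply i).comp measurable_fst

theorem measurable_insertChain {n : ℕ} :
    Measurable fun p : (Fin n → ℝ × Λ) × (ℝ × Λ) => insertChain p.1 p.2 := by
  classical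
  set F : ℕ → ((Fin n → ℝ × Λ) × (ℝ × Λ)) → (Fin (n + 1) → ℝ × Λ) := fun k p =>
    if h : k < n + 1 then Fin.insertNth (α := fun _ => ℝ × Λ) ⟨k, h⟩ p.2 p.1
    else fun _ => p.2 with hF
  have hFm : ∀ k, Measurable (F k) := by
    intro k
    by_cases h : k < n + 1
    · have h2 : F k = fun p => Fin.insertNth (α := fun _ => ℝ × Λ) ⟨k, h⟩ p.2 p.1 := by
        funext p; simp only [hF]; exact dif_pos h
      rw [h2]; exact measurable_insertNth_fixed _
    · have h2 : F k = fun p => fun _ : Fin (n + 1) => p.2 := by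
        funext p; simp only [hF]; exact dif_neg h
      rw [h2]; exact measurable_pi_lambda _ fun _ => measurable_snd
  have h : (fun p : (Fin n → ℝ × Λ) × (ℝ × Λ) => insertChain p.1 p.2)
      = fun p => F (pos p.1 p.2) p := by
    funext p
    rw [hF]
    simp only
    rw [dif_pos (Nat.lt_succ_of_le (pos_le p.1 p.2)), insertChain_eq]
    rfl
  rw [h]
  exact measurable_apply_nat measurable_pos_pair hFm

theorem measurableSet_ordered {n : ℕ} : MeasurableSet (ordered Λ n) := by
  have h : ordered Λ n = ⋂ (i : Fin n), ⋂ (j : Fin n), ⋂ (_ : i < j),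
      {χ : Fin n → ℝ × Λ | (χ i).1 < (χ j).1} := by
    ext χ
    simp only [Set.mem_iInter, Set.mem_setOf_eq, ordered]
    exact ⟨fun h i j hij => h hij, fun h a b hab => h a b hab⟩
  rw [h]
  exact MeasurableSet.iInter fun i => MeasurableSet.iInter fun j =>
    MeasurableSet.iInter fun _ =>
      measurableSet_lt (measurable_pi_apply i).fst (measurable_pi_apply j).fst

theorem baseMeasure_time_eq_zero (lam : Measure Λ) [SigmaFinite lam] (t : ℝ) :
    baseMeasure lam {x | x.1 = t} = 0 := by
  have h : {x : ℝ × Λ | x.1 = t} = {t} ×ˢ (Set.univ : Set Λ) := by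
    ext x
    simp only [Set.mem_setOf_eq, Set.mem_prod, Set.mem_singleton_iff, Set.mem_univ, and_true]
  rw [h, baseMeasure, Measure.prod_prod]
  have h2 : (volume.restrict (Set.Ici (0 : ℝ))) {t} = 0 := by
    rw [Measure.restrict_apply (measurableSet_singleton t)]
    exact le_antisymm (le_trans (measure_mono Set.inter_subset_left)
      (le_of_eq Real.volume_singleton)) zero_le
  rw [h2, zero_mul]

theorem level_sq_lt_top {lam : Measure Λ} [SigmaFinite lam] {f : Chains Λ → ℂ}
    {ξ : ℝ} (hξ : 1 < ξ)
    (hfin : ∫⁻ χ, ENNReal.ofReal (ξ ^ χ.1) * (‖f χ‖₊ : ENNReal) ^ 2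
      ∂(chainMeasure lam) < ⊤) (n : ℕ) :
    ∫⁻ τ, (‖f ⟨n, τ⟩‖₊ : ENNReal) ^ 2
      ∂((Measure.pi fun _ : Fin n => baseMeasure lam).restrict (ordered Λ n)) < ⊤ := by
  have h1 : ∫⁻ χ, ENNReal.ofReal (ξ ^ χ.1) * (‖f χ‖₊ : ENNReal) ^ 2
      ∂(((Measure.pi fun _ : Fin n => baseMeasure lam).restrict (ordered Λ n)).map
        (Sigma.mk n)) < ⊤ := by
    refine lt_of_le_of_lt ?_ hfin
    rw [chainMeasure, lintegral_sum_measure]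
    exact ENNReal.le_tsum n
  rw [(measurableEmbedding_sigma_mk' n).lintegral_map] at h1
  refine lt_of_le_of_lt (lintegral_mono fun τ => ?_) h1
  have hle : (1 : ENNReal) ≤ ENNReal.ofReal (ξ ^ (n : ℕ)) := by
    rw [ENNReal.one_le_ofReal]
    exact one_le_pow₀ (le_of_lt hξ)
  calc (‖f ⟨n, τ⟩‖₊ : ENNReal) ^ 2 = 1 * (‖f ⟨n, τ⟩‖₊ : ENNReal) ^ 2 := (one_mul _).symm
    _ ≤ ENNReal.ofReal (ξ ^ (n : ℕ)) * (‖f ⟨n, τ⟩‖₊ : ENNReal) ^ 2 :=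
        mul_le_mul_left hle _



instance baseMeasure_sigmaFinite (lam : Measure Λ) [SigmaFinite lam] :
    SigmaFinite (baseMeasure lam) := by
  unfold baseMeasure; infer_instance

/-- The key integrability estimate: for a.e. ordered `n`-chain `τ`, the function
`x ↦ f (τ ⊔ x)` is integrable on `Δ'`. -/
theorem ae_integrableOn_insert (lam : Measure Λ) [SigmaFinite lam]
    {Δ' : Set (ℝ × Λ)} (hΔ' : MeasurableSet Δ') (hΔ'fin : baseMeasure lam Δ' < ⊤)
    {f : Chains Λ → ℂ} (hf : Measurable f) {ξ : ℝ} (hξ : 1 < ξ)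
    (hfin : ∫⁻ χ, ENNReal.ofReal (ξ ^ χ.1) * (‖f χ‖₊ : ENNReal) ^ 2
      ∂(chainMeasure lam) < ⊤) (n : ℕ) :
    ∀ᵐ τ ∂((Measure.pi fun _ : Fin n => baseMeasure lam).restrict (ordered Λ n)),
      IntegrableOn (fun x => f ⟨n + 1, insertChain τ x⟩) Δ' (baseMeasure lam) := by
  classical
  set μ := baseMeasure lam with hμ
  set πn := Measure.pi fun _ : Fin n => μ with hπn
  set πn1 := Measure.pi fun _ : Fin (n + 1) => μ with hπn1
  set νn := πn.restrict (ordered Λ n) with hνn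
  set Q : (Fin (n + 1) → ℝ × Λ) → ENNReal :=
    (ordered Λ (n + 1)).indicator fun τ' => (‖f ⟨n + 1, τ'⟩‖₊ : ENNReal) ^ 2 with hQ
  have hQm : Measurable Q := by
    rw [hQ]
    exact (((hf.comp (measurable_sigma_mk' (n + 1))).nnnorm.coe_nnreal_ennreal).pow_const
      2).indicator measurableSet_ordered
  have hinsm : Measurable fun p : (Fin n → ℝ × Λ) × (ℝ × Λ) => Q (insertChain p.1 p.2) :=
    hQm.comp measurable_insertChain
  -- the integral of `Q` over the full ordered `(n+1)`-level is finite
  have hlevel : ∫⁻ τ', Q τ' ∂πn1 < ⊤ := by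
    rw [hQ, lintegral_indicator measurableSet_ordered]
    exact level_sq_lt_top hξ hfin (n + 1)
  -- change of variables: inserting at a fixed position `k`
  have hchg : ∀ k : Fin (n + 1),
      ∫⁻ p, Q (Fin.insertNth (α := fun _ => ℝ × Λ) k p.2 p.1) ∂(πn.prod μ)
        = ∫⁻ τ', Q τ' ∂πn1 := by
    intro k
    have hMP := (measurePreserving_piFinSuccAbove (fun _ : Fin (n + 1) => μ) k).symm
    have hswap := lintegral_prod_swap (μ := μ) (ν := πn)
      (fun q : (ℝ × Λ) × (Fin n → ℝ × Λ) =>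
        Q (Fin.insertNth (α := fun _ => ℝ × Λ) k q.1 q.2))
    calc ∫⁻ p, Q (Fin.insertNth (α := fun _ => ℝ × Λ) k p.2 p.1) ∂(πn.prod μ)
        = ∫⁻ q, Q (Fin.insertNth (α := fun _ => ℝ × Λ) k q.1 q.2) ∂(μ.prod πn) := hswap
      _ = ∫⁻ τ', Q τ' ∂πn1 := by
          have happ : ∀ q : (ℝ × Λ) × (Fin n → ℝ × Λ),
              Fin.insertNth (α := fun _ => ℝ × Λ) k q.1 q.2
                = (MeasurableEquiv.piFinSuccAbove (fun _ => ℝ × Λ) k).symm q := by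
            intro q
            rw [MeasurableEquiv.piFinSuccAbove_symm_apply]
            rfl
          simp_rw [happ]
          exact hMP.lintegral_comp hQm
  -- finiteness of the double integral
  have key : ∫⁻ τ, (∫⁻ x in Δ', Q (insertChain τ x) ∂μ) ∂νn < ⊤ := by
    have hprod : ∫⁻ p, Q (insertChain p.1 p.2) ∂(νn.prod (μ.restrict Δ'))
        = ∫⁻ τ, ∫⁻ x, Q (insertChain τ x) ∂(μ.restrict Δ') ∂νn :=
      lintegral_prod _ hinsm.aemeasurable
    rw [← hprod]
    have hsplit : ∀ p : (Fin n → ℝ × Λ) × (ℝ × Λ), Q (insertChain p.1 p.2) ≤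
        ∑ k : Fin (n + 1), (if pos p.1 p.2 = (k : ℕ)
          then Q (Fin.insertNth (α := fun _ => ℝ × Λ) k p.2 p.1) else 0) := by
      intro p
      have hrfl : pos p.1 p.2 = ((posFin p.1 p.2 : Fin (n + 1)) : ℕ) := rfl
      have hterm : Q (insertChain p.1 p.2) = (if pos p.1 p.2 = ((posFin p.1 p.2 : Fin (n+1)) : ℕ)
          then Q (Fin.insertNth (α := fun _ => ℝ × Λ) (posFin p.1 p.2) p.2 p.1) else 0) := by
        rw [if_pos hrfl, insertChain_eq]
      rw [hterm]
      exact Finset.single_le_sum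
        (f := fun k : Fin (n + 1) => if pos p.1 p.2 = (k : ℕ)
          then Q (Fin.insertNth (α := fun _ => ℝ × Λ) k p.2 p.1) else 0)
        (fun k _ => zero_le) (Finset.mem_univ _)
    refine lt_of_le_of_lt (lintegral_mono hsplit) ?_
    have hmeas : ∀ k : Fin (n + 1), Measurable fun p : (Fin n → ℝ × Λ) × (ℝ × Λ) =>
        (if pos p.1 p.2 = (k : ℕ)
          then Q (Fin.insertNth (α := fun _ => ℝ × Λ) k p.2 p.1) else 0) := by
      intro k
      exact Measurable.ite (measurable_pos_pair (measurableSet_singleton (k : ℕ)))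
        (hQm.comp (measurable_insertNth_fixed k)) measurable_const
    rw [lintegral_finset_sum _ fun k _ => hmeas k]
    refine ENNReal.sum_lt_top.2 fun k _ => ?_
    have hb1 : ∫⁻ p, (if pos p.1 p.2 = (k : ℕ)
          then Q (Fin.insertNth (α := fun _ => ℝ × Λ) k p.2 p.1) else 0)
          ∂(νn.prod (μ.restrict Δ'))
        ≤ ∫⁻ p, Q (Fin.insertNth (α := fun _ => ℝ × Λ) k p.2 p.1)
          ∂(νn.prod (μ.restrict Δ')) := by
      refine lintegral_mono fun p => ?_
      split_ifs <;> simp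
    have hb2 : ∫⁻ p, Q (Fin.insertNth (α := fun _ => ℝ × Λ) k p.2 p.1)
          ∂(νn.prod (μ.restrict Δ'))
        ≤ ∫⁻ p, Q (Fin.insertNth (α := fun _ => ℝ × Λ) k p.2 p.1) ∂(πn.prod μ) := by
      rw [hνn, Measure.prod_restrict]
      exact lintegral_mono' Measure.restrict_le_self le_rfl
    exact lt_of_le_of_lt (le_trans hb1 hb2) (by rw [hchg k]; exact hlevel)
  -- pass to the a.e. statement
  have hHm : Measurable fun τ => ∫⁻ x, Q (insertChain τ x) ∂(μ.restrict Δ') :=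
    Measurable.lintegral_prod_right (f := fun τ x => Q (insertChain τ x)) hinsm
  have hae1 : ∀ᵐ τ ∂νn, (∫⁻ x in Δ', Q (insertChain τ x) ∂μ) < ⊤ :=
    ae_lt_top hHm (ne_of_lt key)
  filter_upwards [hae1, ae_restrict_mem (measurableSet_ordered (n := n))] with τ hfin2 hord
  -- a.e. `x` has no tie with the times of `τ`
  have hties : ∀ᵐ x ∂(μ.restrict Δ'), ∀ i : Fin n, (τ i).1 ≠ x.1 := by
    have hnull : μ (⋃ i : Fin n, {x : ℝ × Λ | x.1 = (τ i).1}) = 0 :=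
      measure_iUnion_null fun i => baseMeasure_time_eq_zero lam _
    have hnull' : (μ.restrict Δ') (⋃ i : Fin n, {x : ℝ × Λ | x.1 = (τ i).1}) = 0 :=
      le_antisymm (le_trans (Measure.restrict_le_self _) (le_of_eq hnull)) zero_le
    rw [ae_iff]
    refine measure_mono_null ?_ hnull'
    intro x hx
    simp only [Set.mem_setOf_eq] at hx
    push_neg at hx
    obtain ⟨i, hi⟩ := hx
    exact Set.mem_iUnion.2 ⟨i, hi.symm⟩
  -- identify the two integrands a.e.
  have hcongr : ∫⁻ x in Δ', (‖f ⟨n + 1, insertChain τ x⟩‖₊ : ENNReal) ^ 2 ∂μ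
      = ∫⁻ x in Δ', Q (insertChain τ x) ∂μ := by
    refine lintegral_congr_ae ?_
    filter_upwards [hties] with x hx
    have hmem : insertChain τ x ∈ ordered Λ (n + 1) :=
      strictMono_insertChain hord hx
    rw [hQ, Set.indicator_of_mem hmem]
  have hsq : ∫⁻ x in Δ', (‖f ⟨n + 1, insertChain τ x⟩‖₊ : ENNReal) ^ 2 ∂μ < ⊤ := by
    rw [hcongr]; exact hfin2
  -- conclude integrability via `Memℒp` for `p = 2` on a finite measure
  have hm : Measurable fun x => f ⟨n + 1, insertChain τ x⟩ :=
    (hf.comp (measurable_sigma_mk' (n + 1))).comp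
      (measurable_insertChain.comp (measurable_const.prodMk measurable_id))
  haveI : IsFiniteMeasure (μ.restrict Δ') :=
    ⟨by rw [Measure.restrict_apply_univ]; exact hΔ'fin⟩
  have hmem2 : MemLp (fun x => f ⟨n + 1, insertChain τ x⟩) 2 (μ.restrict Δ') := by
    refine ⟨hm.aestronglyMeasurable, ?_⟩
    rw [eLpNorm_eq_lintegral_rpow_enorm_toReal two_ne_zero ENNReal.ofNat_ne_top]
    refine ENNReal.rpow_lt_top_of_nonneg (by norm_num) ?_
    have htor : ((2 : ENNReal)).toReal = (2 : ℝ) := by simp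
    rw [htor]
    have hconv : ∀ y : ENNReal, y ^ (2 : ℝ) = y ^ (2 : ℕ) := fun y => by
      rw [← ENNReal.rpow_natCast]; norm_num
    simp_rw [hconv]
    exact ne_of_lt hsq
  exact hmem2.integrable one_le_two



/-- Transfer of an a.e. property on `Γₙ` to `Γₙ₊₁` through `removeNth`. -/
theorem ae_removeNth {lam : Measure Λ} [SigmaFinite lam] {n : ℕ}
    {P : (Fin n → ℝ × Λ) → Prop}
    (hP : ∀ᵐ τ ∂((Measure.pi fun _ : Fin n => baseMeasure lam).restrict (ordered Λ n)), P τ)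
    (j : Fin (n + 1)) :
    ∀ᵐ χ ∂((Measure.pi fun _ : Fin (n + 1) => baseMeasure lam).restrict (ordered Λ (n + 1))),
      P (j.removeNth χ) := by
  set μ := baseMeasure lam with hμ
  set πn := Measure.pi fun _ : Fin n => μ with hπn
  set πn1 := Measure.pi fun _ : Fin (n + 1) => μ with hπn1
  rw [ae_iff] at hP ⊢
  obtain ⟨N, hsub, hNm, hN0⟩ := exists_measurable_superset_of_null hP
  rw [Measure.restrict_apply hNm] at hN0
  have hpre : πn1 ((fun χ : Fin (n + 1) → ℝ × Λ => j.removeNth χ) ⁻¹'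
      (N ∩ ordered Λ n)) = 0 := by
    have hMP := measurePreserving_piFinSuccAbove (fun _ : Fin (n + 1) => μ) j
    have hset : (fun χ : Fin (n + 1) → ℝ × Λ => j.removeNth χ) ⁻¹' (N ∩ ordered Λ n)
        = (MeasurableEquiv.piFinSuccAbove (fun _ : Fin (n + 1) => ℝ × Λ) j) ⁻¹'
          ((Set.univ : Set (ℝ × Λ)) ×ˢ (N ∩ ordered Λ n)) := by
      ext χ
      simp only [Set.mem_preimage, Set.mem_prod, Set.mem_univ, true_and]
      rfl
    rw [hset, hMP.measure_preimage
      (MeasurableSet.univ.prod (hNm.inter measurableSet_ordered)).nullMeasurableSet,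
      Measure.prod_prod, hN0, mul_zero]
  rw [Measure.restrict_apply' measurableSet_ordered]
  refine measure_mono_null ?_ hpre
  rintro χ ⟨hbad, hordχ⟩
  simp only [Set.mem_setOf_eq] at hbad
  exact ⟨hsub hbad, strictMono_removeNth hordχ j⟩


/-- For all measurable `Δ, Δ' ⊆ Γ₁` of finite measure, the
operators `A(Δ')` and `A*(Δ)` satisfy the canonical commutation relation on
the domain `D`: `A(Δ')A*(Δ)f − A*(Δ)A(Δ')f = λ(Δ ∩ Δ') · f`. -/
theorem canonical_commutation (lam : Measure Λ) [SigmaFinite lam]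
    (Δ Δ' : Set (ℝ × Λ)) (hΔ : MeasurableSet Δ) (hΔ' : MeasurableSet Δ')
    (hΔfin : baseMeasure lam Δ < ⊤) (hΔ'fin : baseMeasure lam Δ' < ⊤)
    (f : Chains Λ → ℂ) (hf : memD lam f) :
    ∀ᵐ χ ∂(chainMeasure lam),
      annihilate lam Δ' (create Δ f) χ - create Δ (annihilate lam Δ' f) χ =
        ((baseMeasure lam (Δ ∩ Δ')).toReal : ℂ) * f χ := by
  classical
  obtain ⟨hfm, ξ, hξ, hfin⟩ := hf
  set μ := baseMeasure lam with hμdef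
  rw [chainMeasure, Measure.ae_sum_iff]
  intro n
  rw [(measurableEmbedding_sigma_mk' n).ae_map_iff]
  haveI : IsFiniteMeasure (μ.restrict Δ') :=
    ⟨by rw [Measure.restrict_apply_univ]; exact hΔ'fin⟩
  cases n with
  | zero =>
    refine Filter.Eventually.of_forall fun χ => ?_
    have hc0 : create Δ (annihilate lam Δ' f) ⟨0, χ⟩ = 0 := rfl
    have h1 : ∀ x : ℝ × Λ, create Δ f ⟨0 + 1, insertChain χ x⟩
        = Δ.indicator (fun _ => f ⟨0, χ⟩) x := by
      intro x
      show (∑ i : Fin 1, Δ.indicator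
        (fun _ => f ⟨0, i.removeNth (insertChain χ x)⟩) ((insertChain χ x) i)) = _
      rw [Fin.sum_univ_one]
      have hp0 : (posFin χ x : Fin 1) = 0 := by
        apply Fin.ext
        simp [posFin, pos]
      have hx0 : insertChain χ x 0 = x := by
        rw [← hp0, insertChain_apply_posFin]
      have hrm : (0 : Fin 1).removeNth (insertChain χ x) = χ := by
        funext i; exact i.elim0
      rw [hx0, hrm]
    have hann : annihilate lam Δ' (create Δ f) ⟨0, χ⟩
        = ∫ x in Δ', Δ.indicator (fun _ => f ⟨0, χ⟩) x ∂μ := by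
      show (∫ x in Δ', create Δ f ⟨0 + 1, insertChain χ x⟩ ∂μ) = _
      exact integral_congr_ae (Filter.Eventually.of_forall h1)
    rw [hann, hc0, integral_indicator_const _ hΔ, measureReal_restrict_apply hΔ, measureReal_def, sub_zero,
      Complex.real_smul]
  | succ m =>
    have hgood0 := ae_integrableOn_insert lam hΔ' hΔ'fin hfm hξ hfin m
    filter_upwards [ae_restrict_mem (measurableSet_ordered (n := m + 1)),
      ae_all_iff.2 fun j : Fin (m + 1) => ae_removeNth hgood0 j] with χ hord hgood
    have h1 : ∀ x : ℝ × Λ, create Δ f ⟨m + 1 + 1, insertChain χ x⟩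
        = Δ.indicator (fun _ => f ⟨m + 1, χ⟩) x
          + ∑ j : Fin (m + 1),
              Δ.indicator (fun _ => f ⟨m + 1, insertChain (j.removeNth χ) x⟩) (χ j) := by
      intro x
      show (∑ i : Fin (m + 2), Δ.indicator
        (fun _ => f ⟨m + 1, i.removeNth (insertChain χ x)⟩) ((insertChain χ x) i)) = _
      rw [Fin.sum_univ_succAbove _ (posFin χ x)]
      congr 1
      · rw [insertChain_apply_posFin, removeNth_posFin_insertChain]
      · refine Finset.sum_congr rfl fun j _ => ?_
        rw [insertChain_apply_succAbove, removeNth_insertChain hord]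
    have hint1 : Integrable (fun x => Δ.indicator (fun _ => f ⟨m + 1, χ⟩) x)
        (μ.restrict Δ') := by
      rw [integrable_indicator_iff hΔ]
      exact integrableOn_const (ne_of_lt (lt_of_le_of_lt (by
        rw [Measure.restrict_apply hΔ]
        exact measure_mono Set.inter_subset_right) hΔ'fin))
    have hintj : ∀ j : Fin (m + 1), Integrable
        (fun x => Δ.indicator
          (fun _ => f ⟨m + 1, insertChain (j.removeNth χ) x⟩) (χ j)) (μ.restrict Δ') := by
      intro j
      by_cases hc : χ j ∈ Δ
      · simp only [Set.indicator_of_mem hc]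
        exact hgood j
      · simp only [Set.indicator_of_notMem hc]
        exact integrable_zero _ _ _
    have hann : annihilate lam Δ' (create Δ f) ⟨m + 1, χ⟩
        = (∫ x in Δ', Δ.indicator (fun _ => f ⟨m + 1, χ⟩) x ∂μ)
          + ∑ j : Fin (m + 1), ∫ x in Δ',
              Δ.indicator (fun _ => f ⟨m + 1, insertChain (j.removeNth χ) x⟩) (χ j) ∂μ := by
      have hstep : annihilate lam Δ' (create Δ f) ⟨m + 1, χ⟩
          = ∫ x in Δ', (Δ.indicator (fun _ => f ⟨m + 1, χ⟩) x
            + ∑ j : Fin (m + 1),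
                Δ.indicator (fun _ => f ⟨m + 1, insertChain (j.removeNth χ) x⟩) (χ j)) ∂μ := by
        show (∫ x in Δ', create Δ f ⟨m + 1 + 1, insertChain χ x⟩ ∂μ) = _
        exact integral_congr_ae (Filter.Eventually.of_forall h1)
      rw [hstep, integral_add hint1 (integrable_finset_sum _ fun j _ => hintj j),
        integral_finset_sum _ fun j _ => hintj j]
    have hcreate : create Δ (annihilate lam Δ' f) ⟨m + 1, χ⟩
        = ∑ j : Fin (m + 1), ∫ x in Δ',
            Δ.indicator (fun _ => f ⟨m + 1, insertChain (j.removeNth χ) x⟩) (χ j) ∂μ := by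
      show (∑ j : Fin (m + 1), Δ.indicator
        (fun _ => annihilate lam Δ' f ⟨m, j.removeNth χ⟩) (χ j)) = _
      refine Finset.sum_congr rfl fun j _ => ?_
      by_cases hc : χ j ∈ Δ
      · simp only [Set.indicator_of_mem hc]
        rfl
      · simp only [Set.indicator_of_notMem hc]
        rw [integral_zero]
    rw [hann, hcreate, integral_indicator_const _ hΔ, measureReal_restrict_apply hΔ, measureReal_def,
      Complex.real_smul]
    ring

end QuantumChains
end

section
/- If ω c ε = ε c ω, then the positive bounded operator p_∞ := ½ ε^{-1/2} |c̃| ε^{-1/2} satisfies p_∞ ε p_∞ = ¼ c ε c and p_∞ ω c = c ω p_∞; hence the constant function p(t) ≡ p_∞ is a stationary positive solution of the operator Riccati equation dp/dt + i(p ω c − c ω p) + p ε p = ¼ c ε c. -/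
/-!
**Statement 10.** Under the hypotheses of Statement 9 (`ω c ε = ε c ω`), the
positive operator `p_∞ = ½ ε^{-1/2} |c̃| ε^{-1/2}` satisfies
`p_∞ ε p_∞ = ¼ c ε c` and `p_∞ ω c = c ω p_∞`; hence `p(t) ≡ p_∞` is a
stationary positive solution of the Riccati equation
`dp/dt + i(p ω c − c ω p) + p ε p = ¼ c ε c`.

The positive square roots `e = ε^{1/2}`, `einv = ε^{-1/2}` and the absolute
value `a = |c̃| = ((ε^{1/2} c ε^{1/2})²)^{1/2}` are characterized by
positivity together with `e * e = ε`, `einv * e = 1 = e * einv` and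
`a * a = c̃ * c̃`.
-/


set_option maxHeartbeats 1000000
set_option synthInstance.maxHeartbeats 400000

open StarAlgebra in
lemma commute_cfc_complex {A : Type*} [CStarAlgebra A] {b x : A} (hb : IsSelfAdjoint b)
    (h : b * x = x * b) (f : ℂ → ℂ) : cfc f b * x = x * cfc f b := by
  have hsx : star x * b = b * star x := by
    have h' := congrArg star h
    simpa [star_mul, hb.star_eq] using h'
  have hmemc : b ∈ StarSubalgebra.centralizer ℂ ({x} : Set A) := by
    rw [StarSubalgebra.mem_centralizer_iff]
    rintro g hg
    rw [Set.mem_singleton_iff] at hg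
    subst hg
    exact ⟨h.symm, hsx⟩
  have hclosed : IsClosed ((StarSubalgebra.centralizer ℂ ({x} : Set A) : StarSubalgebra ℂ A) : Set A) := by
    rw [StarSubalgebra.coe_centralizer]
    have hset : (({x} : Set A) ∪ star {x}).centralizer
        = ⋂ m ∈ (({x} : Set A) ∪ star {x}), {z | m * z = z * m} := by
      ext z
      simp [Set.mem_centralizer_iff]
    rw [hset]
    exact isClosed_biInter fun m _ => isClosed_eq (continuous_mul_left m) (continuous_mul_right m)
  have hmem : cfc f b ∈ elemental ℂ b := by
    refine cfc_cases (· ∈ elemental ℂ b) b f (zero_mem _) fun hf hbn => ?_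
    rw [cfcHom_eq_of_isStarNormal (ha := hbn)]
    simp only [StarAlgHom.comp_apply, StarSubalgebra.coe_subtype]
    exact SetLike.coe_mem _
  have hle := StarAlgebra.elemental.le_of_mem hclosed hmemc hmem
  rw [StarSubalgebra.mem_centralizer_iff] at hle
  exact (hle x rfl).1.symm

lemma sqrt_commute {A : Type*} [CStarAlgebra A] [PartialOrder A] [StarOrderedRing A]
    {b x : A} (hb : 0 ≤ b) (h : b * x = x * b) :
    CFC.sqrt b * x = x * CFC.sqrt b := by
  rw [CFC.sqrt_eq_cfc (a := b), cfc_nnreal_eq_real _ _ hb,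
    cfc_real_eq_complex _ (IsSelfAdjoint.of_nonneg hb)]
  exact commute_cfc_complex (IsSelfAdjoint.of_nonneg hb) h _

open ContinuousLinearMap

theorem stationary_Riccati_solution
    {H : Type*} [NormedAddCommGroup H] [InnerProductSpace ℂ H]
    [CompleteSpace H]
    (ε ω c e einv a : H →L[ℂ] H)
    (hε : ε.IsPositive) (hω : IsSelfAdjoint ω) (hc : IsSelfAdjoint c)
    (he : e.IsPositive) (hee : e * e = ε)
    (heinv : einv.IsPositive) (hei : einv * e = 1) (hie : e * einv = 1)
    (ha : a.IsPositive) (haa : a * a = (e * c * e) * (e * c * e))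
    (hcomm : ω * c * ε = ε * c * ω) :
    (((2 : ℂ)⁻¹ • (einv * a * einv)).IsPositive) ∧
    ((2 : ℂ)⁻¹ • (einv * a * einv)) * ε * ((2 : ℂ)⁻¹ • (einv * a * einv)) =
      (4 : ℂ)⁻¹ • (c * ε * c) ∧
    ((2 : ℂ)⁻¹ • (einv * a * einv)) * ω * c =
      c * ω * ((2 : ℂ)⁻¹ • (einv * a * einv)) ∧
    Complex.I • (((2 : ℂ)⁻¹ • (einv * a * einv)) * ω * c -
        c * ω * ((2 : ℂ)⁻¹ • (einv * a * einv))) +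
      ((2 : ℂ)⁻¹ • (einv * a * einv)) * ε * ((2 : ℂ)⁻¹ • (einv * a * einv)) =
        (4 : ℂ)⁻¹ • (c * ε * c) := by
  have hei' : ∀ z : H →L[ℂ] H, einv * (e * z) = z := fun z => by
    rw [← mul_assoc, hei, one_mul]
  have hie' : ∀ z : H →L[ℂ] H, e * (einv * z) = z := fun z => by
    rw [← mul_assoc, hie, one_mul]
  -- pointed form of the commutation hypothesis, with `ε` expanded as `e * e`
  have hw : ∀ z : H →L[ℂ] H, ω * (c * (e * (e * z))) = e * (e * (c * (ω * z))) := by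
    intro z
    have h0 := congrArg (· * z) hcomm
    rw [← hee] at h0
    simpa only [mul_assoc] using h0
  have h6 : ω * (c * e) = e * (e * (c * (ω * einv))) := by
    have h0 := hw einv
    rwa [hie, mul_one] at h0
  have h7 : ∀ z : H →L[ℂ] H,
      einv * (ω * (c * (e * (e * z)))) = e * (c * (ω * z)) := fun z => by
    have h0 := congrArg (einv * ·) (hw z)
    rwa [hei'] at h0
  set t := e * c * e with htdef
  set d := t * t with hddef
  set x := einv * ω * c * e with hxdef
  set y := e * c * ω * einv with hydef
  have R1 : d * x = y * d := by
    rw [hddef, htdef, hxdef, hydef]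
    simp only [mul_assoc, hei', hie']
    rw [hw (c * e)]
  have R2 : d * y = x * d := by
    rw [hddef, htdef, hxdef, hydef]
    simp only [mul_assoc, hei', hie']
    rw [← h6, h7 (c * (e * (e * (c * e)))), hw (c * e)]
  have ht_sa : IsSelfAdjoint t := by
    rw [htdef]
    show star (e * c * e) = e * c * e
    simp [star_mul, he.isSelfAdjoint.star_eq, hc.star_eq, mul_assoc]
  have hd0 : (0 : H →L[ℂ] H) ≤ d := by
    have h0 := star_mul_self_nonneg t
    rwa [ht_sa.star_eq] at h0
  have hd_sa : IsSelfAdjoint d := IsSelfAdjoint.of_nonneg hd0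
  have hdd0 : (0 : H →L[ℂ] H) ≤ d * d := by
    have h0 := star_mul_self_nonneg d
    rwa [hd_sa.star_eq] at h0
  have hddx : (d * d) * x = x * (d * d) := by
    calc (d * d) * x = d * (d * x) := mul_assoc _ _ _
      _ = d * (y * d) := by rw [R1]
      _ = (d * y) * d := (mul_assoc _ _ _).symm
      _ = (x * d) * d := by rw [R2]
      _ = x * (d * d) := mul_assoc _ _ _
  have hdx : d * x = x * d := by
    have h0 := sqrt_commute hdd0 hddx
    rwa [CFC.sqrt_mul_self d hd0] at h0
  have ha0 : (0 : H →L[ℂ] H) ≤ a := (nonneg_iff_isPositive a).mpr ha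
  have hsd : CFC.sqrt d = a := CFC.sqrt_unique haa ha0
  have hax : a * x = x * a := by
    have h0 := sqrt_commute hd0 hdx
    rwa [hsd] at h0
  have hyxd : (y - x) * d = 0 := by
    rw [sub_mul, ← R1, hdx, sub_self]
  have hyxa : (y - x) * a = 0 := by
    have h1 : ((y - x) * a) * star ((y - x) * a) = 0 := by
      rw [star_mul, ha.isSelfAdjoint.star_eq]
      calc (y - x) * a * (a * star (y - x)) = ((y - x) * (a * a)) * star (y - x) := by
            simp only [mul_assoc]
        _ = 0 := by rw [haa, hyxd, zero_mul]
    have h3 := CStarRing.norm_self_mul_star (x := (y - x) * a)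
    rw [h1, norm_zero] at h3
    exact norm_eq_zero.mp (mul_self_eq_zero.mp h3.symm)
  have hya : y * a = x * a := by
    rw [sub_mul] at hyxa
    exact sub_eq_zero.mp hyxa
  have haxy : a * x = y * a := by rw [hax, hya]
  have g3 : (einv * a * einv) * ω * c = c * ω * (einv * a * einv) := by
    have h0 := congrArg (fun z => einv * z * einv) haxy
    rw [hxdef, hydef] at h0
    simp only [mul_assoc, hei', hie', hei, hie, one_mul, mul_one] at h0 ⊢
    exact h0
  have g2 : (einv * a * einv) * ε * (einv * a * einv) = c * ε * c := by
    have hstep : ∀ z : H →L[ℂ] H,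
        a * (a * z) = e * (c * (e * (e * (c * (e * z))))) := fun z => by
      have h0 := congrArg (· * z) haa
      rw [hddef, htdef] at h0
      simpa only [mul_assoc] using h0
    rw [← hee]
    simp only [mul_assoc, hei', hie', hei, hie, one_mul, mul_one]
    rw [hstep einv]
    simp only [mul_assoc, hei', hie', hei, hie, one_mul, mul_one]
  have hP : (einv * a * einv).IsPositive := by
    have h0 := ha.conj_adjoint einv
    rw [← star_eq_adjoint, heinv.isSelfAdjoint.star_eq] at h0
    exact h0
  have hstar2 : star ((2 : ℂ)⁻¹) = (2 : ℂ)⁻¹ := by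
    simp
  have hPs : (((2 : ℂ)⁻¹ • (einv * a * einv)) : H →L[ℂ] H).IsPositive := by
    exact hP.smul_of_nonneg (by rw [Complex.le_def]; norm_num)
  have G2 : ((2 : ℂ)⁻¹ • (einv * a * einv)) * ε * ((2 : ℂ)⁻¹ • (einv * a * einv)) =
      (4 : ℂ)⁻¹ • (c * ε * c) := by
    rw [smul_mul_assoc, smul_mul_assoc, mul_smul_comm, smul_smul, g2]
    norm_num
  have G3 : ((2 : ℂ)⁻¹ • (einv * a * einv)) * ω * c =
      c * ω * ((2 : ℂ)⁻¹ • (einv * a * einv)) := by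
    rw [smul_mul_assoc, smul_mul_assoc, mul_smul_comm, g3]
  exact ⟨hPs, G2, G3, by rw [G3, sub_self, smul_zero, zero_add, G2]⟩
end

section
/- Let ε > 0 and c ∈ ℝ with c ≠ 0. Set q₀ = (2 − |c|)/(2 + |c|), q(t) = q₀ e^{−ε|c|t}, and p(t) = (|c|/2) · (1 + q(t))/(1 − q(t)). Then |q₀| < 1, the denominator 1 − q(t) is strictly positive for all t ≥ 0, p is differentiable on [0,∞) with p(0) = 1 and p'(t) = ε( c²/4 − p(t)² ) for all t ≥ 0, p(t) → |c|/2 as t → ∞, and the convergence is exponential: |p(t) − |c|/2| ≤ ( |c| |q₀| / (1 − |q₀|) ) e^{−ε|c|t} for all t ≥ 0. -/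
/-!
**Statement 11.** The solution `p(t) = (|c|/2)(1 + q(t))/(1 − q(t))`,
`q(t) = q₀ e^{−ε|c|t}`, `q₀ = (2−|c|)/(2+|c|)`, of the scalar Riccati
equation `p' = ε(c²/4 − p²)` with `p(0) = 1` is well defined for all `t ≥ 0`
and converges exponentially to the minimal-uncertainty value `|c|/2`.
-/

open Filter

private lemma riccati_alg (ε a u : ℝ) (hu : 1 - u ≠ 0) :
    (a / 2 * (-(ε * a) * u) * (1 - u) - a / 2 * (1 + u) * -(-(ε * a) * u)) / (1 - u) ^ 2
      = ε * (a ^ 2 / 4 - (a / 2 * (1 + u) / (1 - u)) ^ 2) := by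
  field_simp
  ring

theorem scalar_Riccati_solution (ε c : ℝ) (hε : 0 < ε) (hc : c ≠ 0) :
    let q₀ : ℝ := (2 - |c|) / (2 + |c|)
    let q : ℝ → ℝ := fun t => q₀ * Real.exp (-(ε * |c| * t))
    let p : ℝ → ℝ := fun t => (|c| / 2) * (1 + q t) / (1 - q t)
    |q₀| < 1 ∧
    (∀ t : ℝ, 0 ≤ t → 0 < 1 - q t) ∧
    p 0 = 1 ∧
    (∀ t : ℝ, 0 ≤ t → HasDerivAt p (ε * (c ^ 2 / 4 - (p t) ^ 2)) t) ∧
    Tendsto p atTop (nhds (|c| / 2)) ∧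
    ∀ t : ℝ, 0 ≤ t →
      |p t - |c| / 2| ≤ (|c| * |q₀| / (1 - |q₀|)) * Real.exp (-(ε * |c| * t)) := by
  intro q₀ q p
  have ha : 0 < |c| := abs_pos.mpr hc
  have h2a : 0 < 2 + |c| := by linarith
  -- |q₀| < 1
  have hq0 : |q₀| < 1 := by
    rw [abs_div, abs_of_pos h2a, div_lt_one h2a]
    rcases abs_cases (2 - |c|) with ⟨h, _⟩ | ⟨h, _⟩ <;> linarith
  -- |q t| ≤ |q₀| for t ≥ 0
  have hqt : ∀ t : ℝ, 0 ≤ t → |q t| ≤ |q₀| := by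
    intro t ht
    have he : Real.exp (-(ε * |c| * t)) ≤ 1 := by
      apply Real.exp_le_one_iff.mpr
      nlinarith [mul_nonneg (mul_nonneg hε.le ha.le) ht]
    have he0 : 0 ≤ Real.exp (-(ε * |c| * t)) := (Real.exp_pos _).le
    calc |q t| = |q₀| * Real.exp (-(ε * |c| * t)) := by
          simp [q, abs_mul, abs_of_nonneg he0]
      _ ≤ |q₀| * 1 := by
          exact mul_le_mul_of_nonneg_left he (abs_nonneg _)
      _ = |q₀| := mul_one _
  have hden : ∀ t : ℝ, 0 ≤ t → 0 < 1 - q t := by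
    intro t ht
    have := hqt t ht
    have := abs_lt.mp (lt_of_le_of_lt this hq0)
    linarith [this.2]
  refine ⟨hq0, hden, ?_, ?_, ?_, ?_⟩
  · -- p 0 = 1
    have : q 0 = q₀ := by simp [q]
    have hne : (2 + |c|) ≠ 0 := ne_of_gt h2a
    simp only [p, this, q₀]
    field_simp
    rw [div_eq_iff (by intro h; linarith)]
    ring
  · -- derivative
    intro t ht
    have hd : 1 - q t ≠ 0 := ne_of_gt (hden t ht)
    have hq' : HasDerivAt q (q₀ * (-(ε * |c|)) * Real.exp (-(ε * |c| * t))) t := by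
      have h1 : HasDerivAt (fun t : ℝ => -(ε * |c| * t)) (-(ε * |c|)) t := by
        exact ((hasDerivAt_id t).const_mul (ε * |c|)).neg.congr_deriv (by ring)
      have h2 := h1.exp.const_mul q₀
      show HasDerivAt (fun t => q₀ * Real.exp (-(ε * |c| * t))) _ t
      exact h2.congr_deriv (by ring)
    set q' : ℝ := q₀ * (-(ε * |c|)) * Real.exp (-(ε * |c| * t)) with hq'def
    have hN : HasDerivAt (fun t => (|c| / 2) * (1 + q t)) ((|c| / 2) * q') t := by
      simpa using ((hasDerivAt_const t (1:ℝ)).add hq').const_mul (|c| / 2)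
    have hD : HasDerivAt (fun t => 1 - q t) (-q') t := by
      exact ((hasDerivAt_const t (1:ℝ)).sub hq').congr_deriv (by ring)
    have hp := hN.div hD hd
    have hq'eq : q' = -(ε * |c|) * q t := by
      simp only [hq'def, q]; ring
    have key : (|c| / 2 * q' * (1 - q t) - |c| / 2 * (1 + q t) * -q') / (1 - q t) ^ 2
        = ε * (c ^ 2 / 4 - (p t) ^ 2) := by
      rw [hq'eq, show c ^ 2 = |c| ^ 2 from (sq_abs c).symm]
      exact riccati_alg ε |c| (q t) hd
    exact key ▸ hp
  · -- tendsto
    have h1 : Tendsto (fun t : ℝ => ε * |c| * t) atTop atTop := by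
      exact Tendsto.const_mul_atTop (mul_pos hε ha) tendsto_id
    have hexp : Tendsto (fun t : ℝ => Real.exp (-(ε * |c| * t))) atTop (nhds 0) :=
      Real.tendsto_exp_neg_atTop_nhds_zero.comp h1
    have hqlim : Tendsto q atTop (nhds 0) := by
      simpa using hexp.const_mul q₀
    have hnum : Tendsto (fun t => (|c| / 2) * (1 + q t)) atTop (nhds ((|c| / 2) * (1 + 0))) :=
      (tendsto_const_nhds.add hqlim).const_mul _
    have hden' : Tendsto (fun t => 1 - q t) atTop (nhds (1 - 0)) :=
      tendsto_const_nhds.sub hqlim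
    have := hnum.div hden' (by norm_num)
    rw [show |c| / 2 * (1 + 0) / (1 - 0) = |c| / 2 by ring] at this
    exact this
  · -- exponential bound
    intro t ht
    have hd := hden t ht
    have he0 : (0:ℝ) < Real.exp (-(ε * |c| * t)) := Real.exp_pos _
    have habs : |q t| = |q₀| * Real.exp (-(ε * |c| * t)) := by
      simp [q, abs_mul, abs_of_pos he0]
    have hden2 : 1 - |q₀| ≤ 1 - q t := by
      have := (abs_le.mp (hqt t ht)).2
      linarith
    have h1q0 : 0 < 1 - |q₀| := by linarith
    have hdiff : p t - |c| / 2 = |c| * q t / (1 - q t) := by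
      simp only [p]
      field_simp
      ring
    rw [hdiff, abs_div, abs_of_pos hd, abs_mul, abs_of_pos ha]
    rw [div_le_iff₀ hd]
    have hle : |c| * |q t| ≤ |c| * (|q₀| * Real.exp (-(ε * |c| * t))) := by
      rw [habs]
    calc |c| * |q t| = |c| * |q₀| * Real.exp (-(ε * |c| * t)) := by rw [habs]; ring
      _ = (|c| * |q₀| / (1 - |q₀|)) * Real.exp (-(ε * |c| * t)) * (1 - |q₀|) := by
          field_simp
      _ ≤ (|c| * |q₀| / (1 - |q₀|)) * Real.exp (-(ε * |c| * t)) * (1 - q t) := by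
          apply mul_le_mul_of_nonneg_left hden2
          positivity
end
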